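/- Let F* : X₀ × U₀ → X̃₀ × Ũ₀ be a bijection and define F : X̃₀ × X₀ × U₀ → X̃₀ × X₀ × U₀ by F(a,b,c) = (F*^{(1)}(b,c), F*^{−1}(a, F*^{(2)}(b,c))). Then the following are equivalent for probability measures μ on X₀, ν on U₀, μ̃ on X̃₀: (a) the pushforward of μ̃ × μ × ν under the last two coordinates of F equals μ × ν; (b) F(μ̃ × μ × ν) = μ̃ × μ × ν; (c) there exists a probability measure ν̃ on Ũ₀ such that F*(μ × ν) = μ̃ × ν̃. -/

import Mathlib

open MeasureTheory

theorem typeII_detailed_balance_tfae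
    {X U X' U' : Type*}
    [MeasurableSpace X] [MeasurableSpace U] [MeasurableSpace X'] [MeasurableSpace U']
    (Fs : (X × U) ≃ᵐ (X' × U'))
    (μ : Measure X) (ν : Measure U) (μt : Measure X')
    [IsProbabilityMeasure μ] [IsProbabilityMeasure ν] [IsProbabilityMeasure μt]
    (F : X' × X × U → X' × X × U)
    (hF : ∀ (a : X') (b : X) (c : U),
      F (a, b, c) = ((Fs (b, c)).1, Fs.symm (a, (Fs (b, c)).2))) :
    [Measure.map (fun p => (F p).2) (μt.prod (μ.prod ν)) = μ.prod ν,
     Measure.map F (μt.prod (μ.prod ν)) = μt.prod (μ.prod ν),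
     ∃ νt : Measure U', IsProbabilityMeasure νt ∧
        Measure.map Fs (μ.prod ν) = μt.prod νt].TFAE := by
  have hFeq : F = fun p : X' × X × U =>
      ((Fs p.2).1, Fs.symm (p.1, (Fs p.2).2)) := by
    funext p
    obtain ⟨a, b, c⟩ := p
    exact hF a b c
  have hFs : Measurable Fs := Fs.measurable
  have hFss : Measurable Fs.symm := Fs.symm.measurable
  have hFmeas : Measurable F := by
    rw [hFeq]
    fun_prop
  have hsnd : Measurable fun p : X' × X × U => (F p).2 := hFmeas.snd
  -- the map q ↦ (Fs q).2
  have hg2 : Measurable fun q : X × U => (Fs q).2 := hFs.snd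
  tfae_have 1 → 3
  · intro h1
    refine ⟨Measure.map (fun q : X × U => (Fs q).2) (μ.prod ν), ?_, ?_⟩
    · exact Measure.isProbabilityMeasure_map hg2.aemeasurable
    · have : Measure.map Fs (μ.prod ν)
          = Measure.map (Fs ∘ fun p : X' × X × U => (F p).2) (μt.prod (μ.prod ν)) := by
        rw [← Measure.map_map hFs hsnd, h1]
      rw [this]
      have hcomp : (Fs ∘ fun p : X' × X × U => (F p).2)
          = Prod.map (id : X' → X') (fun q : X × U => (Fs q).2) := by
        funext p
        obtain ⟨a, b, c⟩ := p
        simp [hF, Prod.map]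
      rw [hcomp, ← Measure.map_prod_map _ _ measurable_id hg2, Measure.map_id]
  tfae_have 3 → 2
  · rintro ⟨νt, hνt, hc⟩
    have step1 : Measure.map (Prod.map (id : X' → X') (Fs : X × U → X' × U'))
        (μt.prod (μ.prod ν)) = μt.prod (μt.prod νt) := by
      rw [← Measure.map_prod_map _ _ measurable_id hFs, Measure.map_id, hc]
    set σ : X' × X' × U' → X' × X' × U' := fun p => (p.2.1, (p.1, p.2.2)) with hσdef
    have hσmeas : Measurable σ := by fun_prop
    have hσinv : Measure.map σ (μt.prod (μt.prod νt)) = μt.prod (μt.prod νt) := by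
      have hσ : σ = (MeasurableEquiv.prodAssoc : (X' × X') × U' ≃ᵐ X' × X' × U') ∘
          (Prod.map (Prod.swap : X' × X' → X' × X') (id : U' → U')) ∘
          (MeasurableEquiv.prodAssoc : (X' × X') × U' ≃ᵐ X' × X' × U').symm := by
        funext p; rfl
      have e1 : Measure.map (MeasurableEquiv.prodAssoc : (X' × X') × U' ≃ᵐ X' × X' × U').symm
          (μt.prod (μt.prod νt)) = (μt.prod μt).prod νt := by
        rw [← Measure.prodAssoc_prod (μ := μt) (ν := μt) (τ := νt),
          MeasurableEquiv.prodAssoc.map_symm_map]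
      rw [hσ, ← Function.comp_assoc, ← Measure.map_map (by fun_prop : Measurable
          ((MeasurableEquiv.prodAssoc : (X' × X') × U' ≃ᵐ X' × X' × U') ∘
            Prod.map (Prod.swap : X' × X' → X' × X') (id : U' → U')))
          MeasurableEquiv.prodAssoc.symm.measurable, e1,
        ← Measure.map_map MeasurableEquiv.prodAssoc.measurable
          (measurable_swap.prodMap measurable_id),
        ← Measure.map_prod_map _ _ measurable_swap measurable_id,
        Measure.prod_swap, Measure.map_id, Measure.prodAssoc_prod]
    have hFcomp : F = (Prod.map (id : X' → X') (Fs.symm : X' × U' → X × U)) ∘ σ ∘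
        (Prod.map (id : X' → X') (Fs : X × U → X' × U')) := by
      funext p
      obtain ⟨a, b, c⟩ := p
      simp [hF, σ, Prod.map]
    rw [hFcomp, ← Function.comp_assoc, ← Measure.map_map (by fun_prop : Measurable
        ((Prod.map (id : X' → X') (Fs.symm : X' × U' → X × U)) ∘ σ))
        (measurable_id.prodMap hFs), step1,
      ← Measure.map_map (measurable_id.prodMap hFss) hσmeas, hσinv,
      ← Measure.map_prod_map _ _ measurable_id hFss, Measure.map_id,
      ← hc, Fs.map_symm_map]
  tfae_have 2 → 1
  · intro h2
    have : Measure.map (fun p : X' × X × U => (F p).2) (μt.prod (μ.prod ν))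
        = Measure.map Prod.snd (Measure.map F (μt.prod (μ.prod ν))) := by
      rw [Measure.map_map measurable_snd hFmeas]; rfl
    rw [this, h2]
    have := Measure.snd_prod (μ := μt) (ν := μ.prod ν)
    rwa [Measure.snd] at this
  tfae_finish
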